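/- Let ε ∈ (0,1), let d ≥ 1 be an integer, and let π_1, …, π_{d+1} be reals with ε ≤ π_j ≤ 1 for all j. If for some index i with 1 ≤ i ≤ d one has π_i · ∏_{j=1}^{i−1} (1−π_j) < π_{d+1} · ∏_{j=1}^{d} (1−π_j), then d − i + 1 < ln(ε) / ln(1−ε). -/

import Mathlib

/-- Let `ε ∈ (0,1)`, `d ≥ 1`, and `p 1, …, p (d+1)` reals with
`ε ≤ p j ≤ 1` for all `j`. If for some `i` with `1 ≤ i ≤ d` one has
`p i * ∏_{j=1}^{i−1} (1 − p j) < p (d+1) * ∏_{j=1}^{d} (1 − p j)`,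
then `d − i + 1 < ln ε / ln (1−ε)`. -/
theorem stmt_9 (ε : ℝ) (hε0 : 0 < ε) (hε1 : ε < 1) (d : ℕ) (hd : 1 ≤ d)
    (p : ℕ → ℝ) (hp : ∀ j, 1 ≤ j → j ≤ d + 1 → ε ≤ p j ∧ p j ≤ 1)
    (i : ℕ) (hi1 : 1 ≤ i) (hid : i ≤ d)
    (h : p i * ∏ j ∈ Finset.Icc 1 (i - 1), (1 - p j) <
      p (d + 1) * ∏ j ∈ Finset.Icc 1 d, (1 - p j)) :
    (d : ℝ) - (i : ℝ) + 1 < Real.log ε / Real.log (1 - ε) := by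
  set A := ∏ j ∈ Finset.Icc 1 (i - 1), (1 - p j) with hA
  set C := ∏ j ∈ Finset.Ico i (d + 1), (1 - p j) with hC
  have hbound : ∀ j ∈ Finset.Icc 1 d, 0 ≤ 1 - p j ∧ 1 - p j ≤ 1 - ε := by
    intro j hj
    simp only [Finset.mem_Icc] at hj
    obtain ⟨h1, h2⟩ := hp j hj.1 (by omega)
    constructor <;> linarith
  have hsplit : (∏ j ∈ Finset.Icc 1 d, (1 - p j)) = A * C := by
    rw [hA, hC]
    rw [show Finset.Icc 1 (i-1) = Finset.Ico 1 i by ext x; simp [Finset.mem_Icc, Finset.mem_Ico]; omega,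
      show Finset.Icc 1 d = Finset.Ico 1 (d+1) from rfl]
    exact (Finset.prod_Ico_consecutive _ hi1 (by omega)).symm
  have hA0 : 0 ≤ A := Finset.prod_nonneg fun j hj => by
    have := hbound j (by simp only [Finset.mem_Icc] at hj ⊢; omega)
    exact this.1
  have hC0 : 0 ≤ C := Finset.prod_nonneg fun j hj => by
    have := hbound j (by simp only [Finset.mem_Ico] at hj; simp only [Finset.mem_Icc]; omega)
    exact this.1
  have hCle : C ≤ (1 - ε) ^ (d + 1 - i) := by
    have := Finset.prod_le_prod (f := fun j => 1 - p j) (g := fun _ => 1 - ε)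
      (s := Finset.Ico i (d+1))
      (fun j hj => (hbound j (by simp only [Finset.mem_Ico] at hj; simp only [Finset.mem_Icc]; omega)).1)
      (fun j hj => (hbound j (by simp only [Finset.mem_Ico] at hj; simp only [Finset.mem_Icc]; omega)).2)
    rwa [Finset.prod_const, Nat.card_Ico] at this
  have hpi : ε ≤ p i := (hp i hi1 (by omega)).1
  have hpd1 : p (d+1) ≤ 1 := (hp (d+1) (by omega) le_rfl).2
  have key : ε * A < A * (1 - ε) ^ (d + 1 - i) := by
    calc ε * A ≤ p i * A := by nlinarith
    _ < p (d+1) * (A * C) := by rwa [hsplit] at h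
    _ ≤ 1 * (A * C) := mul_le_mul_of_nonneg_right hpd1 (mul_nonneg hA0 hC0)
    _ = A * C := by ring
    _ ≤ A * (1 - ε) ^ (d + 1 - i) := by nlinarith
  have hApos : 0 < A := by
    rcases hA0.lt_or_eq with h' | h'
    · exact h'
    · exfalso; rw [← h'] at key; simp at key
  have hεlt : ε < (1 - ε) ^ (d + 1 - i) := by
    have := (mul_lt_mul_iff_of_pos_right hApos).mp (by linarith [key] : ε * A < (1 - ε) ^ (d + 1 - i) * A)
    exact this
  have hlog : Real.log ε < (d + 1 - i : ℕ) * Real.log (1 - ε) := by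
    have := Real.log_lt_log hε0 hεlt
    rwa [Real.log_pow] at this
  have hlneg : Real.log (1 - ε) < 0 := Real.log_neg (by linarith) (by linarith)
  have : ((d + 1 - i : ℕ) : ℝ) < Real.log ε / Real.log (1 - ε) :=
    (lt_div_iff_of_neg hlneg).mpr (by linarith)
  have hcast : ((d + 1 - i : ℕ) : ℝ) = (d : ℝ) - (i : ℝ) + 1 := by
    push_cast [Nat.cast_sub (by omega : i ≤ d + 1)]; ring
  linarith [hcast ▸ this]
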